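/- With the triad generator L̃ and Gaussian equilibrium density p ∝ exp(−|x|²/(2σ_eq²)), for every i ≥ 0 the quantity k̂^{(i)}(0) = σ_eq⁻² E_p[(L̃ⁱ x) x^T] is invariant under the sign change (B̃₁,B̃₂,B̃₃) ↦ (−B̃₁,−B̃₂,−B̃₃). Consequently the parameters B̃ᵢ cannot be uniquely identified from the family {k̂^{(i)}(0)}_{i≥0}. -/

import Mathlib

open Matrix MeasureTheory

noncomputable def tgen (Ct Λmat : Matrix (Fin 3) (Fin 3) ℝ) (σt b₁ b₂ b₃ : ℝ)
    (f : (Fin 3 → ℝ) → ℝ) (x : Fin 3 → ℝ) : ℝ :=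
  (∑ l, ((![b₁ * x 1 * x 2, b₂ * x 0 * x 2, b₃ * x 0 * x 1] : Fin 3 → ℝ) l
          + Ct.mulVec x l) * fderiv ℝ f x (Pi.single l 1))
  + (σt ^ 2 / 2) * ∑ l, ∑ m, Λmat l m *
      fderiv ℝ (fun y => fderiv ℝ f y (Pi.single l 1)) x (Pi.single m 1)

lemma fd_neg (g : (Fin 3 → ℝ) → ℝ) (x v : Fin 3 → ℝ) :
    fderiv ℝ (fun y => g (-y)) x v = - fderiv ℝ g (-x) v := by
  have h := (ContinuousLinearEquiv.neg ℝ (M := Fin 3 → ℝ)).comp_right_fderiv (f := g) (x := x)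
  have h2 : (g ∘ (ContinuousLinearEquiv.neg ℝ (M := Fin 3 → ℝ))) = fun y => g (-y) := rfl
  rw [h2] at h
  rw [h]
  simp

lemma fd_negfun (g : (Fin 3 → ℝ) → ℝ) (x v : Fin 3 → ℝ) :
    fderiv ℝ (fun y => -(g y)) x v = -(fderiv ℝ g x v) := by
  rw [fderiv_fun_neg]; simp

lemma tgen_neg_comp (Ct Λm : Matrix (Fin 3) (Fin 3) ℝ) (σt b₁ b₂ b₃ : ℝ)
    (f : (Fin 3 → ℝ) → ℝ) (x : Fin 3 → ℝ) :
    tgen Ct Λm σt b₁ b₂ b₃ (fun y => f (-y)) x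
      = tgen Ct Λm σt (-b₁) (-b₂) (-b₃) f (-x) := by
  have h2 : ∀ l : Fin 3, (fun y => fderiv ℝ (fun z => f (-z)) y (Pi.single l 1))
      = fun y => -(fderiv ℝ f (-y) (Pi.single l 1)) :=
    fun l => funext fun y => fd_neg f y _
  have h3 : ∀ l m : Fin 3,
      fderiv ℝ (fun y => fderiv ℝ (fun z => f (-z)) y (Pi.single l 1)) x (Pi.single m 1)
      = fderiv ℝ (fun y => fderiv ℝ f y (Pi.single l 1)) (-x) (Pi.single m 1) := by
    intro l m
    rw [h2 l, fd_negfun (fun y => fderiv ℝ f (-y) (Pi.single l 1)) x,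
      fd_neg (fun z => fderiv ℝ f z (Pi.single l 1)) x]
    ring
  unfold tgen
  simp only [h3]
  simp only [fd_neg f]
  simp only [Fin.sum_univ_three, Matrix.cons_val_zero, Matrix.cons_val_one, Matrix.head_cons,
    Matrix.cons_val_two, Matrix.tail_cons, Matrix.mulVec, dotProduct, Pi.neg_apply]
  ring

lemma tgen_neg_fun (Ct Λm : Matrix (Fin 3) (Fin 3) ℝ) (σt b₁ b₂ b₃ : ℝ)
    (f : (Fin 3 → ℝ) → ℝ) (x : Fin 3 → ℝ) :
    tgen Ct Λm σt b₁ b₂ b₃ (fun y => -(f y)) x = -(tgen Ct Λm σt b₁ b₂ b₃ f x) := by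
  have h2 : ∀ l : Fin 3, (fun y => fderiv ℝ (fun z => -(f z)) y (Pi.single l 1))
      = fun y => -(fderiv ℝ f y (Pi.single l 1)) :=
    fun l => funext fun y => fd_negfun f y _
  have h3 : ∀ l m : Fin 3,
      fderiv ℝ (fun y => fderiv ℝ (fun z => -(f z)) y (Pi.single l 1)) x (Pi.single m 1)
      = -(fderiv ℝ (fun y => fderiv ℝ f y (Pi.single l 1)) x (Pi.single m 1)) := by
    intro l m
    rw [h2 l, fd_negfun (fun y => fderiv ℝ f y (Pi.single l 1)) x]
  unfold tgen
  simp only [h3]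
  simp only [fd_negfun f]
  simp only [Fin.sum_univ_three, Matrix.cons_val_zero, Matrix.cons_val_one, Matrix.head_cons,
    Matrix.cons_val_two, Matrix.tail_cons]
  ring

lemma tgen_iter_neg_fun (Ct Λm : Matrix (Fin 3) (Fin 3) ℝ) (σt b₁ b₂ b₃ : ℝ) :
    ∀ (i : ℕ) (f : (Fin 3 → ℝ) → ℝ) (x : Fin 3 → ℝ),
      (tgen Ct Λm σt b₁ b₂ b₃)^[i] (fun y => -(f y)) x
        = -((tgen Ct Λm σt b₁ b₂ b₃)^[i] f x) := by
  intro i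
  induction i with
  | zero => intro f x; rfl
  | succ n ih =>
    intro f x
    rw [Function.iterate_succ_apply, Function.iterate_succ_apply]
    have : tgen Ct Λm σt b₁ b₂ b₃ (fun y => -(f y))
        = fun z => -(tgen Ct Λm σt b₁ b₂ b₃ f z) :=
      funext fun z => tgen_neg_fun Ct Λm σt b₁ b₂ b₃ f z
    rw [this]
    exact ih _ x

lemma tgen_iter_neg_comp (Ct Λm : Matrix (Fin 3) (Fin 3) ℝ) (σt b₁ b₂ b₃ : ℝ) :
    ∀ (i : ℕ) (f : (Fin 3 → ℝ) → ℝ) (x : Fin 3 → ℝ),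
      (tgen Ct Λm σt b₁ b₂ b₃)^[i] (fun y => f (-y)) x
        = (tgen Ct Λm σt (-b₁) (-b₂) (-b₃))^[i] f (-x) := by
  intro i
  induction i with
  | zero => intro f x; rfl
  | succ n ih =>
    intro f x
    rw [Function.iterate_succ_apply, Function.iterate_succ_apply]
    have : tgen Ct Λm σt b₁ b₂ b₃ (fun y => f (-y))
        = fun z => tgen Ct Λm σt (-b₁) (-b₂) (-b₃) f (-z) :=
      funext fun z => tgen_neg_comp Ct Λm σt b₁ b₂ b₃ f z
    rw [this]
    exact ih _ x

lemma tgen_iter_key (Ct Λm : Matrix (Fin 3) (Fin 3) ℝ) (σt b₁ b₂ b₃ : ℝ)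
    (i : ℕ) (j : Fin 3) (x : Fin 3 → ℝ) :
    (tgen Ct Λm σt (-b₁) (-b₂) (-b₃))^[i] (fun y => y j) x
      = -((tgen Ct Λm σt b₁ b₂ b₃)^[i] (fun y => y j) (-x)) := by
  have h := tgen_iter_neg_comp Ct Λm σt b₁ b₂ b₃ i (fun y => y j) (-x)
  rw [neg_neg] at h
  have h2 : (fun y : Fin 3 → ℝ => (-y) j) = fun y => -(y j) := rfl
  rw [h2] at h
  rw [← h, tgen_iter_neg_fun]

/-- The essential statistics `k̂⁽ⁱ⁾(0) = σ_eq⁻² E_p[(L̃ⁱx) xᵀ]` of the triad model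
are invariant under `(B̃₁,B̃₂,B̃₃) ↦ (−B̃₁,−B̃₂,−B̃₃)`; consequently, the parameters
`B̃ᵢ` cannot be uniquely identified from the family `{k̂⁽ⁱ⁾(0)}ᵢ`. -/
theorem triad_nonidentifiability
    (σeq σt : ℝ) (hσ : 0 < σeq)
    (Lmat Λmat : Matrix (Fin 3) (Fin 3) ℝ) :
    let Ct : Matrix (Fin 3) (Fin 3) ℝ := Lmat - Λmat
    let gen : ℝ → ℝ → ℝ → ((Fin 3 → ℝ) → ℝ) → ((Fin 3 → ℝ) → ℝ) :=
      fun b₁ b₂ b₃ f x =>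
        (∑ l, ((![b₁ * x 1 * x 2, b₂ * x 0 * x 2, b₃ * x 0 * x 1] : Fin 3 → ℝ) l
                + Ct.mulVec x l) * fderiv ℝ f x (Pi.single l 1))
        + (σt ^ 2 / 2) * ∑ l, ∑ m, Λmat l m *
            fderiv ℝ (fun y => fderiv ℝ f y (Pi.single l 1)) x (Pi.single m 1)
    let p : (Fin 3 → ℝ) → ℝ :=
      fun x => ((2 * Real.pi * σeq ^ 2) ^ ((3:ℝ)/2))⁻¹ *
        Real.exp (-(∑ k, (x k) ^ 2) / (2 * σeq ^ 2))
    let stat : ℝ → ℝ → ℝ → ℕ → Matrix (Fin 3) (Fin 3) ℝ :=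
      fun b₁ b₂ b₃ i => Matrix.of fun j l =>
        σeq⁻¹ ^ 2 * ∫ x : Fin 3 → ℝ, (gen b₁ b₂ b₃)^[i] (fun y => y j) x * x l * p x
    ∀ b₁ b₂ b₃ : ℝ,
      (∀ i : ℕ, stat (-b₁) (-b₂) (-b₃) i = stat b₁ b₂ b₃ i) ∧
      ((b₁, b₂, b₃) ≠ (0, 0, 0) →
        ∃ b' : ℝ × ℝ × ℝ, b' ≠ (b₁, b₂, b₃) ∧
          ∀ i : ℕ, stat b'.1 b'.2.1 b'.2.2 i = stat b₁ b₂ b₃ i) := by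
  intro Ct gen p stat b₁ b₂ b₃
  have hgen : gen = fun b₁ b₂ b₃ => tgen Ct Λmat σt b₁ b₂ b₃ := rfl
  have hpeven : ∀ x : Fin 3 → ℝ, p (-x) = p x := by
    intro x
    show ((2 * Real.pi * σeq ^ 2) ^ ((3:ℝ)/2))⁻¹ *
        Real.exp (-(∑ k, ((-x) k) ^ 2) / (2 * σeq ^ 2)) = _
    simp [Pi.neg_apply, neg_sq]
    rfl
  have key : ∀ i : ℕ, stat (-b₁) (-b₂) (-b₃) i = stat b₁ b₂ b₃ i := by
    intro i
    show (Matrix.of fun j l => σeq⁻¹ ^ 2 *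
        ∫ x : Fin 3 → ℝ, (gen (-b₁) (-b₂) (-b₃))^[i] (fun y => y j) x * x l * p x) = _
    ext j l
    simp only [Matrix.of_apply]
    congr 1
    have hint : ∀ x : Fin 3 → ℝ,
        (gen (-b₁) (-b₂) (-b₃))^[i] (fun y => y j) x * x l * p x
        = (fun z => (gen b₁ b₂ b₃)^[i] (fun y => y j) z * z l * p z) (-x) := by
      intro x
      rw [hgen]
      rw [tgen_iter_key Ct Λmat σt b₁ b₂ b₃ i j x]
      have : (-x) l = -(x l) := rfl
      simp only [this, hpeven x]
      ring
    rw [funext hint]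
    exact integral_neg_eq_self
      (fun z => (gen b₁ b₂ b₃)^[i] (fun y => y j) z * z l * p z) volume
  refine ⟨key, fun hne => ⟨(-b₁, -b₂, -b₃), ?_, key⟩⟩
  intro h
  apply hne
  rw [Prod.mk.injEq, Prod.mk.injEq] at h ⊢
  obtain ⟨h1, h2, h3⟩ := h
  refine ⟨by linarith, by linarith, by linarith⟩
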